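/- arXiv:2405.19095 — 6 statements merged into one kernel-verified Lean document; each statement's English description precedes it below -/
import Mathlib

section
/- For any typed combinatory algebra A, the category of assemblies over A is equivalent to the category of assemblies over the augmented TCA A¹ with a unit type; in particular, any assembly over A¹ with realizer type 1 is isomorphic in Asm(A¹) to an assembly whose realizer type lies in the original type system. -/
open CategoryTheory

/-- A type system: a nonempty set of types closed under an arrow operation. -/
structure TypeSystem where
  T : Type
  nonempty : Nonempty T
  arr : T → T → T

/-- A typed combinatory algebra (TCA) over a type system. -/
structure TCA (S : TypeSystem) where
  El : S.T → Type
  el_nonempty : ∀ t, Nonempty (El t)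
  app : ∀ {a b : S.T}, El (S.arr a b) → El a → El b
  k : ∀ a b : S.T, El (S.arr a (S.arr b a))
  s : ∀ a b c : S.T,
    El (S.arr (S.arr a (S.arr b c)) (S.arr (S.arr a b) (S.arr a c)))
  k_spec : ∀ (a b : S.T) (x : El a) (y : El b), app (app (k a b) x) y = x
  s_spec : ∀ (a b c : S.T) (f : El (S.arr a (S.arr b c)))
    (g : El (S.arr a b)) (x : El a),
    app (app (app (s a b c) f) g) x = app (app f x) (app g x)

namespace TCA

variable {S : TypeSystem} (A : TCA S)

/-- The typed identity combinator `I = s k k`. -/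
def I (a : S.T) : A.El (S.arr a a) :=
  A.app (A.app (A.s a (S.arr a a) a) (A.k a (S.arr a a))) (A.k a a)

theorem I_spec (a : S.T) (x : A.El a) : A.app (A.I a) x = x := by
  simp [TCA.I, A.s_spec, A.k_spec]

/-- The typed composition combinator `B e' e = λx. e'(e x)`, namely
`s (k e') e`. -/
def B {a b c : S.T} (e' : A.El (S.arr b c)) (e : A.El (S.arr a b)) :
    A.El (S.arr a c) :=
  A.app (A.app (A.s a b c) (A.app (A.k (S.arr b c) a) e')) e

theorem B_spec {a b c : S.T} (e' : A.El (S.arr b c)) (e : A.El (S.arr a b))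
    (x : A.El a) : A.app (A.B e' e) x = A.app e' (A.app e x) := by
  simp [TCA.B, A.s_spec, A.k_spec]

end TCA

/-- An assembly over a TCA. -/
structure Asm {S : TypeSystem} (A : TCA S) where
  X : Type
  rt : S.T
  rel : A.El rt → X → Prop
  total : ∀ x, ∃ a, rel a x

instance {S : TypeSystem} (A : TCA S) : Category (Asm A) where
  Hom X Y := {f : X.X → Y.X // ∃ e : A.El (S.arr X.rt Y.rt),
    ∀ (x : X.X) (a : A.El X.rt), X.rel a x → Y.rel (A.app e a) (f x)}
  id X := ⟨id, A.I X.rt, fun x a h => by rw [A.I_spec]; exact h⟩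
  comp {X Y Z} f g := ⟨g.1 ∘ f.1, by
    obtain ⟨e, he⟩ := f.2
    obtain ⟨e', he'⟩ := g.2
    exact ⟨A.B e' e, fun x a h => by rw [A.B_spec]; exact he' _ _ (he _ _ h)⟩⟩
  id_comp f := rfl
  comp_id f := rfl
  assoc f g h := rfl

/-- The arrow of the augmented type system `T¹ = T ∪ {1}` (the unit type is
`none`): `1 → A := A` and `A → 1 := 1`. -/
def augArr (S : TypeSystem) : Option S.T → Option S.T → Option S.T
  | none, t => t
  | some _, none => none
  | some a, some b => some (S.arr a b)

/-- The augmented type system `T¹ = T ∪ {1}`. -/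
def TypeSystem.augment (S : TypeSystem) : TypeSystem :=
  ⟨Option S.T, ⟨none⟩, augArr S⟩



section Aux

variable {S : TypeSystem} {A : TCA S} {B : TCA S.augment}
  (hEl : ∀ t : S.T, B.El (some t) = A.El t)
  (happ : ∀ (t u : S.T) (f : B.El (S.augment.arr (some t) (some u)))
    (f' : A.El (S.arr t u)) (x : B.El (some t)) (x' : A.El t),
    HEq f f' → HEq x x' → HEq (B.app f x) (A.app f' x'))
  (hsub : ∀ x y : B.El none, x = y)

set_option maxHeartbeats 1000000

include hEl happ in
theorem aux_app_eq (t u : S.T) (e : A.El (S.arr t u))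
    (e' : B.El (S.augment.arr (some t) (some u))) (he : HEq e' e)
    (b : B.El (some t)) :
    cast (hEl u) (B.app e' b) = A.app e (cast (hEl t) b) := by
  apply eq_of_heq
  exact (cast_heq _ _).trans
    (happ t u e' e b (cast (hEl t) b) he (cast_heq _ _).symm)

include hEl happ in
noncomputable def auxF : Asm A ⥤ Asm B where
  obj X := ⟨X.X, some X.rt, fun b x => X.rel (cast (hEl X.rt) b) x,
    fun x => by
      obtain ⟨a, ha⟩ := X.total x
      refine ⟨cast (hEl X.rt).symm a, ?_⟩
      show X.rel (cast (hEl X.rt) (cast (hEl X.rt).symm a)) x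
      rwa [cast_cast, cast_eq]⟩
  map {X Y} f := ⟨f.1, by
    obtain ⟨e, he⟩ := f.2
    refine ⟨(cast (hEl (S.arr X.rt Y.rt)).symm e :
      B.El (S.augment.arr (some X.rt) (some Y.rt))), fun x b hb => ?_⟩
    show Y.rel (cast (hEl Y.rt) _) _
    have key := aux_app_eq hEl happ X.rt Y.rt e
      (cast (hEl (S.arr X.rt Y.rt)).symm e) (cast_heq _ _) b
    show Y.rel (cast (hEl Y.rt) (B.app (cast (hEl (S.arr X.rt Y.rt)).symm e) b)) (f.1 x)
    rw [key]
    exact he x _ hb⟩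
  map_id X := rfl
  map_comp f g := rfl

include hEl happ in
theorem auxF_faithful : (auxF (B := B) hEl happ).Faithful := by
  constructor
  intro X Y f g h
  have h2 : ((auxF (B := B) hEl happ).map f).1 = ((auxF (B := B) hEl happ).map g).1 :=
    congrArg Subtype.val h
  exact Subtype.ext h2

include hEl happ in
theorem auxF_full : (auxF (B := B) hEl happ).Full := by
  constructor
  intro X Y g
  obtain ⟨e', he'⟩ := g.2
  refine ⟨⟨g.1, cast (hEl (S.arr X.rt Y.rt)) e', fun x a ha => ?_⟩, rfl⟩
  have h2 := he' x (cast (hEl X.rt).symm a) (by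
    show X.rel (cast (hEl X.rt) (cast (hEl X.rt).symm a)) x
    rwa [cast_cast, cast_eq])
  have key := aux_app_eq hEl happ X.rt Y.rt (cast (hEl (S.arr X.rt Y.rt)) e')
    e' (cast_heq _ _).symm (cast (hEl X.rt).symm a)
  rw [cast_cast, cast_eq] at key
  have h3 : Y.rel (cast (hEl Y.rt) (B.app e' (cast (hEl X.rt).symm a))) (g.1 x) := h2
  erw [key] at h3
  exact h3

include hEl happ hsub in
theorem auxF_essSurj : (auxF (B := B) hEl happ).EssSurj := by
  constructor
  intro Z
  obtain ⟨ZX, rt, rel, tot⟩ := Z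
  match rt with
  | some t =>
    refine ⟨⟨ZX, t, fun a x => rel (cast (hEl t).symm a) x,
      fun x => by
        obtain ⟨b, hb⟩ := tot x
        refine ⟨cast (hEl t) b, ?_⟩
        show rel (cast (hEl t).symm (cast (hEl t) b)) x
        rwa [cast_cast, cast_eq]⟩, ⟨⟨?_, ?_, ?_, ?_⟩⟩⟩
    · refine ⟨id, B.I (some t), fun x b hb => ?_⟩
      show rel (B.app (B.I (some t)) b) x
      erw [B.I_spec]
      have hb' : rel (cast (hEl t).symm (cast (hEl t) b)) x := hb
      erw [cast_cast, cast_eq] at hb'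
      exact hb'
    · refine ⟨id, B.I (some t), fun x b hb => ?_⟩
      show rel (cast (hEl t).symm (cast (hEl t) (B.app (B.I (some t)) b))) x
      erw [B.I_spec, cast_cast, cast_eq]
      exact hb
    · exact Subtype.ext rfl
    · exact Subtype.ext rfl
  | none =>
    have t0 : S.T := Classical.choice S.nonempty
    refine ⟨⟨ZX, t0, fun _ _ => True,
      fun x => ⟨Classical.choice (A.el_nonempty t0), trivial⟩⟩, ⟨⟨?_, ?_, ?_, ?_⟩⟩⟩
    · refine ⟨id, Classical.choice (B.el_nonempty _), fun x b _ => ?_⟩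
      obtain ⟨c, hc⟩ := tot x
      have h : ∀ d : B.El none, rel d x := fun d => hsub c d ▸ hc
      exact h _
    · exact ⟨id, Classical.choice (B.el_nonempty _), fun x b hb => trivial⟩
    · exact Subtype.ext rfl
    · exact Subtype.ext rfl

end Aux

/-- For a typed combinatory algebra `A`, the category of assemblies over `A`
is equivalent to the category of assemblies over the augmented TCA `A¹` with
a unit type; moreover, any assembly over `A¹` whose realizer type is the
unit type `1` is isomorphic in `Asm(A¹)` to an assembly whose realizer type
lies in the original type system. -/
theorem asm_augment_equivalence (S : TypeSystem) (A : TCA S)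
    (B : TCA S.augment)
    -- `B` is the augmentation `A¹` of `A`:
    (hEl : ∀ t : S.T, B.El (some t) = A.El t)
    (happ : ∀ (t u : S.T) (f : B.El (S.augment.arr (some t) (some u)))
      (f' : A.El (S.arr t u)) (x : B.El (some t)) (x' : A.El t),
      HEq f f' → HEq x x' → HEq (B.app f x) (A.app f' x'))
    (hsub : ∀ x y : B.El none, x = y)
    (hu1 : ∀ (t : Option S.T) (f : B.El (S.augment.arr none t))
      (u : B.El none), B.app f u = f)
    (hu2 : ∀ (t : Option S.T) (g : B.El (S.augment.arr t none))
      (x : B.El t) (v : B.El none), B.app g x = v) :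
    Nonempty (Asm A ≌ Asm B) ∧
      ∀ X : Asm B, X.rt = none →
        ∃ Y : Asm B, (∃ t : S.T, Y.rt = some t) ∧ Nonempty (X ≅ Y) := by
  constructor
  · haveI : (auxF (B := B) hEl happ).IsEquivalence :=
      ⟨auxF_faithful hEl happ, auxF_full hEl happ, auxF_essSurj hEl happ hsub⟩
    exact ⟨(auxF (B := B) hEl happ).asEquivalence⟩
  · intro X hX
    obtain ⟨XX, rt, rel, tot⟩ := X
    cases hX
    have t0 : S.T := Classical.choice S.nonempty
    refine ⟨⟨XX, some t0, fun _ _ => True,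
      fun x => ⟨Classical.choice (B.el_nonempty _), trivial⟩⟩, ⟨t0, rfl⟩,
      ⟨⟨?_, ?_, ?_, ?_⟩⟩⟩
    · exact ⟨id, Classical.choice (B.el_nonempty _), fun x b hb => trivial⟩
    · refine ⟨id, Classical.choice (B.el_nonempty _), fun x b _ => ?_⟩
      obtain ⟨c, hc⟩ := tot x
      have h : ∀ d : B.El none, rel d x := fun d => hsub c d ▸ hc
      exact h _
    · exact Subtype.ext rfl
    · exact Subtype.ext rfl
end

section
/- In the category of groupoids, the diagram consisting of the terminal groupoid I₀, the walking isomorphism I₁ (two objects 0,1 and an isomorphism i : 0 → 1), the groupoid I₂ (three objects 0,1,2 with exactly one morphism in each hom-set), and I₃ (four objects, one morphism in each hom-set), together with the endpoint functors 0,1 : I₀ → I₁, the unique functor * : I₁ → I₀, the swap functor σ : I₁ → I₁ sending i to i⁻¹, the inclusion functors i₀, i₁ : I₁ → I₂, the cocomposition functor 2 : I₁ → I₂ sending i to i₁∘i₀, and the functors j₀, j₁ : I₂ → I₃, forms an interval (internal cogroupoid): both required squares are pushouts in Gpd and all cogroupoid axioms (counit, coassociativity, coinverse laws) hold. -/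
open CategoryTheory CategoryTheory.Limits

/-- The chaotic (indiscrete) groupoid on `n` objects: exactly one morphism
in each hom-set.  `Ch 1` is the terminal groupoid `I₀`, `Ch 2` is the
walking isomorphism `I₁`, `Ch 3` is `I₂` and `Ch 4` is `I₃`. -/
def Ch (n : ℕ) := Fin n

instance (n : ℕ) : Groupoid (Ch n) where
  Hom _ _ := PUnit
  id _ := ⟨⟩
  comp _ _ := ⟨⟩
  inv _ := ⟨⟩
  id_comp _ := rfl
  comp_id _ := rfl
  assoc _ _ _ := rfl
  inv_comp _ := rfl
  comp_inv _ := rfl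

/-- The functor between chaotic groupoids determined by a function on
objects. -/
def chF {m n : ℕ} (f : Fin m → Fin n) : Ch m ⥤ Ch n where
  obj := f
  map _ := ⟨⟩
  map_id _ := rfl
  map_comp _ _ := rfl

namespace GpdInterval

def I0 : Grpd := Grpd.of (Ch 1)
def I1 : Grpd := Grpd.of (Ch 2)
def I2 : Grpd := Grpd.of (Ch 3)
def I3 : Grpd := Grpd.of (Ch 4)

/-- The endpoint `0 : I₀ → I₁`. -/
def zero : I0 ⟶ I1 := chF ![0]
/-- The endpoint `1 : I₀ → I₁`. -/
def one : I0 ⟶ I1 := chF ![1]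
/-- The coidentity `* : I₁ → I₀`. -/
def star : I1 ⟶ I0 := chF ![0, 0]
/-- The coinverse `σ : I₁ → I₁`, sending `i` to `i⁻¹`. -/
def sigma : I1 ⟶ I1 := chF ![1, 0]
/-- The inclusion `i₀ : I₁ → I₂`. -/
def i0 : I1 ⟶ I2 := chF ![0, 1]
/-- The inclusion `i₁ : I₁ → I₂`. -/
def i1 : I1 ⟶ I2 := chF ![1, 2]
/-- The cocomposition `2 : I₁ → I₂`, sending `i` to `i₁ ∘ i₀`. -/
def two : I1 ⟶ I2 := chF ![0, 2]
/-- `j₀ : I₂ → I₃`. -/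
def j0 : I2 ⟶ I3 := chF ![0, 1, 2]
/-- `j₁ : I₂ → I₃`. -/
def j1 : I2 ⟶ I3 := chF ![1, 2, 3]

/-- The universal map `[id, 0∘*] : I₂ → I₁` (with `0∘*` along `i₀` and
`id` along `i₁`). -/
def bCounitL : I2 ⟶ I1 := chF ![0, 0, 1]
/-- The universal map `[1∘*, id] : I₂ → I₁`. -/
def bCounitR : I2 ⟶ I1 := chF ![0, 1, 1]
/-- The universal map `[j₁∘2, j₀∘i₀] : I₂ → I₃`. -/
def bCoassocL : I2 ⟶ I3 := chF ![0, 1, 3]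
/-- The universal map `[j₁∘i₁, j₀∘2] : I₂ → I₃`. -/
def bCoassocR : I2 ⟶ I3 := chF ![0, 2, 3]
/-- The universal map `[id, σ] : I₂ → I₁`. -/
def bCoinvL : I2 ⟶ I1 := chF ![1, 0, 1]
/-- The universal map `[σ, id] : I₂ → I₁`. -/
def bCoinvR : I2 ⟶ I1 := chF ![0, 1, 0]

end GpdInterval

instance (n : ℕ) : Fintype (Ch n) := inferInstanceAs (Fintype (Fin n))
instance (n : ℕ) : DecidableEq (Ch n) := inferInstanceAs (DecidableEq (Fin n))
instance (n : ℕ) [NeZero n] (i : ℕ) : OfNat (Ch n) i := ⟨(⟨i % n, Nat.mod_lt _ (NeZero.pos n)⟩ : Fin n)⟩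
instance : Subsingleton (Ch 1) := inferInstanceAs (Subsingleton (Fin 1))

namespace GpdInterval
instance (n : ℕ) : Fintype ↥(Grpd.of (Ch n)) := inferInstanceAs (Fintype (Fin n))
instance (n i : ℕ) [NeZero n] : OfNat ↥(Grpd.of (Ch n)) i := ⟨(⟨i % n, Nat.mod_lt _ (NeZero.pos n)⟩ : Fin n)⟩
instance (i : ℕ) : OfNat ↥I0 i := ⟨(⟨i % 1, Nat.mod_lt _ (by decide)⟩ : Fin 1)⟩
instance (i : ℕ) : OfNat ↥I1 i := ⟨(⟨i % 2, Nat.mod_lt _ (by decide)⟩ : Fin 2)⟩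
instance (i : ℕ) : OfNat ↥I2 i := ⟨(⟨i % 3, Nat.mod_lt _ (by decide)⟩ : Fin 3)⟩
instance (i : ℕ) : OfNat ↥I3 i := ⟨(⟨i % 4, Nat.mod_lt _ (by decide)⟩ : Fin 4)⟩
instance : Fintype ↥I0 := inferInstanceAs (Fintype (Fin 1))
instance : Fintype ↥I1 := inferInstanceAs (Fintype (Fin 2))
instance : Fintype ↥I2 := inferInstanceAs (Fintype (Fin 3))
instance : Fintype ↥I3 := inferInstanceAs (Fintype (Fin 4))

/-- Any two functors between chaotic groupoids agreeing on objects are equal. -/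
lemma triv {m n : ℕ} (F G : Grpd.of (Ch m) ⟶ Grpd.of (Ch n))
    (h : ∀ a : Fin m, F.obj a = G.obj a) : F = G :=
  CategoryTheory.Functor.ext h (fun _ _ _ => rfl)

/-- The unique morphism `a ⟶ b` in a chaotic groupoid. -/
abbrev hm {n : ℕ} (a b : Ch n) : a ⟶ b := ⟨⟩

lemma map_self {n : ℕ} {X : Grpd} (H : Grpd.of (Ch n) ⟶ X) (a : Ch n) :
    H.map (hm a a) = 𝟙 (H.obj a) := H.map_id a

lemma map_map {n : ℕ} {X : Grpd} (H : Grpd.of (Ch n) ⟶ X) (z a b : Ch n) :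
    H.map (hm z a) ≫ H.map (hm a b) = H.map (hm z b) := (H.map_comp _ _).symm

lemma map_inv_comp {n : ℕ} {X : Grpd} (H : Grpd.of (Ch n) ⟶ X) (z a b : Ch n) :
    H.map (hm a b) = Groupoid.inv (H.map (hm z a)) ≫ H.map (hm z b) := by
  rw [← map_map H z a b, ← Category.assoc, Groupoid.inv_comp, Category.id_comp]

/-- Extensionality for functors out of a chaotic groupoid, based at `z`. -/
lemma chExt {n : ℕ} {X : Grpd} (F G : Grpd.of (Ch n) ⟶ X) (z : Ch n)
    (hobj : ∀ a, F.obj a = G.obj a)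
    (hmap : ∀ a, F.map (hm z a) =
      eqToHom (hobj z) ≫ G.map (hm z a) ≫ eqToHom (hobj a).symm) :
    F = G := by
  refine CategoryTheory.Functor.ext hobj ?_
  intro a b f
  show F.map (hm a b) = eqToHom (hobj a) ≫ G.map (hm a b) ≫ eqToHom (hobj b).symm
  rw [map_inv_comp F z a b, map_inv_comp G z a b, hmap a, hmap b]
  simp [Groupoid.inv_eq_inv]

/-! ### The first pushout square -/

lemma sq1 : zero ≫ i1 = one ≫ i0 := triv _ _ (by intro a; fin_cases a; rfl)

section PO1
variable (s : PushoutCocone zero one)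

lemma po1h : s.inr.obj 1 = s.inl.obj 0 :=
  (Functor.congr_obj s.condition 0).symm

abbrev po1Obj : Fin 3 → ↥s.pt
  | 0 => s.inr.obj 0
  | 1 => s.inr.obj 1
  | 2 => s.inl.obj 1

def po1psi : ∀ a : Fin 3, (po1Obj s 0 : ↥s.pt) ⟶ po1Obj s a
  | 0 => 𝟙 (po1Obj s 0)
  | 1 => s.inr.map (hm 0 1)
  | 2 => s.inr.map (hm 0 1) ≫ eqToHom (po1h s) ≫ s.inl.map (hm 0 1)

abbrev po1Desc : I2 ⟶ s.pt where
  obj := po1Obj s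
  map {a b} _ := Groupoid.inv (po1psi s a) ≫ po1psi s b
  map_id a := by simp
  map_comp f g := by simp

@[simp] lemma po1Desc_map (a b : Ch 3) :
    (po1Desc s).map (hm a b) = Groupoid.inv (po1psi s a) ≫ po1psi s b := rfl

lemma po1_fac_left : i1 ≫ po1Desc s = s.inl := by
  refine chExt _ _ 0 ?_ ?_
  · intro a; fin_cases a
    · exact po1h s
    · rfl
  · intro a; fin_cases a
    · show (po1Desc s).map (hm 1 1) = eqToHom _ ≫ s.inl.map (hm 0 0) ≫ eqToHom _
      erw [map_self, map_self]
      simp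
      erw [eqToHom_trans, eqToHom_refl]
    · show (po1Desc s).map (hm 1 2) = eqToHom _ ≫ s.inl.map (hm 0 1) ≫ eqToHom _
      rw [po1Desc_map]
      simp [po1psi, Groupoid.inv_eq_inv]
      erw [eqToHom_refl, Category.comp_id]

lemma po1_fac_right : i0 ≫ po1Desc s = s.inr := by
  refine chExt _ _ 0 ?_ ?_
  · intro a; fin_cases a <;> rfl
  · intro a; fin_cases a
    · show (po1Desc s).map (hm 0 0) = eqToHom _ ≫ s.inr.map (hm 0 0) ≫ eqToHom _
      erw [map_self, map_self]; simp
      erw [eqToHom_trans, eqToHom_refl]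
    · show (po1Desc s).map (hm 0 1) = eqToHom _ ≫ s.inr.map (hm 0 1) ≫ eqToHom _
      rw [po1Desc_map]
      simp [po1psi, Groupoid.inv_eq_inv]
      erw [eqToHom_refl, eqToHom_refl, Category.id_comp, Category.comp_id]

lemma po1_uniq (m : I2 ⟶ s.pt) (hl : i1 ≫ m = s.inl) (hr : i0 ≫ m = s.inr) :
    m = po1Desc s := by
  have e0 : m.obj 0 = s.inr.obj 0 := Functor.congr_obj hr 0
  have e1 : m.obj 1 = s.inr.obj 1 := Functor.congr_obj hr 1
  have e1' : m.obj 1 = s.inl.obj 0 := Functor.congr_obj hl 0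
  have e2 : m.obj 2 = s.inl.obj 1 := Functor.congr_obj hl 1
  have h01 : m.map (hm 0 1) = eqToHom e0 ≫ s.inr.map (hm 0 1) ≫ eqToHom e1.symm :=
    Functor.congr_hom hr (hm 0 1)
  have h12 : m.map (hm 1 2) = eqToHom e1' ≫ s.inl.map (hm 0 1) ≫ eqToHom e2.symm :=
    Functor.congr_hom hl (hm 0 1)
  refine chExt _ _ 0 ?_ ?_
  · intro a; fin_cases a
    · exact e0
    · exact e1
    · exact e2
  · intro a; fin_cases a
    · show m.map (hm 0 0) = eqToHom _ ≫ (po1Desc s).map (hm 0 0) ≫ eqToHom _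
      erw [map_self, map_self]; simp
    · show m.map (hm 0 1) = eqToHom _ ≫ (po1Desc s).map (hm 0 1) ≫ eqToHom _
      rw [h01, po1Desc_map]
      simp [po1psi, Groupoid.inv_eq_inv]
    · show m.map (hm 0 2) = eqToHom _ ≫ (po1Desc s).map (hm 0 2) ≫ eqToHom _
      rw [← map_map m 0 1 2, h01, h12, po1Desc_map]
      simp [po1psi, Groupoid.inv_eq_inv]

end PO1

lemma pushout1 : IsPushout zero one i1 i0 :=
  IsPushout.of_isColimit
    (PushoutCocone.IsColimit.mk sq1 po1Desc po1_fac_left po1_fac_right po1_uniq)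

/-! ### The second pushout square -/

lemma sq2 : i1 ≫ j0 = i0 ≫ j1 := triv _ _ (by intro a; fin_cases a <;> rfl)

section PO2
variable (s : PushoutCocone i1 i0)

lemma po2h1 : s.inl.obj 1 = s.inr.obj 0 :=
  Functor.congr_obj s.condition 0

lemma po2h2 : s.inl.obj 2 = s.inr.obj 1 :=
  Functor.congr_obj s.condition 1

lemma po2hm : s.inl.map (hm 1 2) =
    eqToHom (po2h1 s) ≫ s.inr.map (hm 0 1) ≫ eqToHom (po2h2 s).symm :=
  Functor.congr_hom s.condition (hm 0 1)

abbrev po2Obj : Fin 4 → ↥s.pt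
  | 0 => s.inl.obj 0
  | 1 => s.inl.obj 1
  | 2 => s.inl.obj 2
  | 3 => s.inr.obj 2

def po2psi : ∀ a : Fin 4, (po2Obj s 0 : ↥s.pt) ⟶ po2Obj s a
  | 0 => 𝟙 (po2Obj s 0)
  | 1 => s.inl.map (hm 0 1)
  | 2 => s.inl.map (hm 0 2)
  | 3 => s.inl.map (hm 0 2) ≫ eqToHom (po2h2 s) ≫ s.inr.map (hm 1 2)

abbrev po2Desc : I3 ⟶ s.pt where
  obj := po2Obj s
  map {a b} _ := Groupoid.inv (po2psi s a) ≫ po2psi s b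
  map_id a := by simp
  map_comp f g := by simp

@[simp] lemma po2Desc_map (a b : Ch 4) :
    (po2Desc s).map (hm a b) = Groupoid.inv (po2psi s a) ≫ po2psi s b := rfl

lemma po2_fac_left : j0 ≫ po2Desc s = s.inl := by
  refine chExt _ _ 0 ?_ ?_
  · intro a; fin_cases a <;> rfl
  · intro a; fin_cases a
    · show (po2Desc s).map (hm 0 0) = eqToHom _ ≫ s.inl.map (hm 0 0) ≫ eqToHom _
      erw [map_self, map_self]; simp
      erw [eqToHom_trans, eqToHom_refl]
    · show (po2Desc s).map (hm 0 1) = eqToHom _ ≫ s.inl.map (hm 0 1) ≫ eqToHom _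
      rw [po2Desc_map]
      simp [po2psi, Groupoid.inv_eq_inv]
      erw [eqToHom_refl, eqToHom_refl, Category.id_comp, Category.comp_id]
    · show (po2Desc s).map (hm 0 2) = eqToHom _ ≫ s.inl.map (hm 0 2) ≫ eqToHom _
      rw [po2Desc_map]
      simp [po2psi, Groupoid.inv_eq_inv]
      erw [eqToHom_refl, eqToHom_refl, Category.id_comp, Category.comp_id]

lemma po2_fac_right : j1 ≫ po2Desc s = s.inr := by
  refine chExt _ _ 0 ?_ ?_
  · intro a; fin_cases a
    · exact po2h1 s
    · exact po2h2 s
    · rfl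
  · intro a; fin_cases a
    · show (po2Desc s).map (hm 1 1) = eqToHom _ ≫ s.inr.map (hm 0 0) ≫ eqToHom _
      erw [map_self, map_self]; simp
      erw [eqToHom_trans, eqToHom_refl]
    · show (po2Desc s).map (hm 1 2) = eqToHom _ ≫ s.inr.map (hm 0 1) ≫ eqToHom _
      rw [po2Desc_map]
      simp only [po2psi]
      rw [← map_map s.inl 0 1 2, po2hm]
      simp [Groupoid.inv_eq_inv]
    · show (po2Desc s).map (hm 1 3) = eqToHom _ ≫ s.inr.map (hm 0 2) ≫ eqToHom _
      rw [po2Desc_map]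
      simp only [po2psi]
      rw [← map_map s.inl 0 1 2, po2hm, ← map_map s.inr 0 1 2]
      simp [Groupoid.inv_eq_inv]

lemma po2_uniq (m : I3 ⟶ s.pt) (hl : j0 ≫ m = s.inl) (hr : j1 ≫ m = s.inr) :
    m = po2Desc s := by
  have e0 : m.obj 0 = s.inl.obj 0 := Functor.congr_obj hl 0
  have e1 : m.obj 1 = s.inl.obj 1 := Functor.congr_obj hl 1
  have e2 : m.obj 2 = s.inl.obj 2 := Functor.congr_obj hl 2
  have e2' : m.obj 2 = s.inr.obj 1 := Functor.congr_obj hr 1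
  have e3 : m.obj 3 = s.inr.obj 2 := Functor.congr_obj hr 2
  have h01 : m.map (hm 0 1) = eqToHom e0 ≫ s.inl.map (hm 0 1) ≫ eqToHom e1.symm :=
    Functor.congr_hom hl (hm 0 1)
  have h12 : m.map (hm 1 2) = eqToHom e1 ≫ s.inl.map (hm 1 2) ≫ eqToHom e2.symm :=
    Functor.congr_hom hl (hm 1 2)
  have h23 : m.map (hm 2 3) = eqToHom e2' ≫ s.inr.map (hm 1 2) ≫ eqToHom e3.symm :=
    Functor.congr_hom hr (hm 1 2)
  refine chExt _ _ 0 ?_ ?_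
  · intro a; fin_cases a
    · exact e0
    · exact e1
    · exact e2
    · exact e3
  · intro a; fin_cases a
    · show m.map (hm 0 0) = eqToHom _ ≫ (po2Desc s).map (hm 0 0) ≫ eqToHom _
      erw [map_self, map_self]; simp
    · show m.map (hm 0 1) = eqToHom _ ≫ (po2Desc s).map (hm 0 1) ≫ eqToHom _
      rw [h01, po2Desc_map]
      simp [po2psi, Groupoid.inv_eq_inv]
    · show m.map (hm 0 2) = eqToHom _ ≫ (po2Desc s).map (hm 0 2) ≫ eqToHom _
      rw [← map_map m 0 1 2, h01, h12, po2Desc_map]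
      simp only [po2psi]
      rw [← map_map s.inl 0 1 2]
      simp [Groupoid.inv_eq_inv]
    · show m.map (hm 0 3) = eqToHom _ ≫ (po2Desc s).map (hm 0 3) ≫ eqToHom _
      rw [← map_map m 0 2 3, ← map_map m 0 1 2, h01, h12, h23, po2Desc_map]
      simp only [po2psi]
      rw [← map_map s.inl 0 1 2]
      simp [Groupoid.inv_eq_inv]

end PO2

lemma pushout2 : IsPushout i1 i0 j0 j1 :=
  IsPushout.of_isColimit
    (PushoutCocone.IsColimit.mk sq2 po2Desc po2_fac_left po2_fac_right po2_uniq)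

/-! ### The terminal object -/

def termI0 : IsTerminal I0 :=
  IsTerminal.ofUniqueHom
    (fun _ => ⟨fun _ => 0, fun _ => ⟨⟩, fun _ => rfl, fun _ _ => rfl⟩)
    (fun _ m => CategoryTheory.Functor.ext
      (fun a => Subsingleton.elim (α := Ch 1) _ _) (fun _ _ _ => rfl))

end GpdInterval

open GpdInterval in
/-- In `Gpd`, the diagram consisting of the terminal groupoid `I₀`, the
walking isomorphism `I₁`, the chaotic groupoids `I₂` (three objects) and
`I₃` (four objects), together with the endpoint functors `0, 1`, the unique
functor `*`, the swap functor `σ`, the inclusions `i₀, i₁`, the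
cocomposition `2` and the functors `j₀, j₁`, forms an interval (internal
cogroupoid): `I₀` is terminal, both required squares are pushouts, and all
the cogroupoid axioms (counit, coassociativity, coinverse laws) hold, the
universal maps `[−,−]` out of the pushout `I₂` being characterized by
their restrictions along `i₀` and `i₁`. -/
theorem gpd_interval_is_cogroupoid :
    Nonempty (IsTerminal I0) ∧
    -- the two pushout squares
    IsPushout zero one i1 i0 ∧
    IsPushout i1 i0 j0 j1 ∧
    -- compatibility of the endpoints with cocomposition and coidentity
    zero ≫ two = zero ≫ i0 ∧
    one ≫ two = one ≫ i1 ∧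
    zero ≫ star = 𝟙 I0 ∧
    one ≫ star = 𝟙 I0 ∧
    -- the coinverse axioms for σ
    zero ≫ sigma = one ∧
    one ≫ sigma = zero ∧
    sigma ≫ sigma = 𝟙 I1 ∧
    -- [id, 0∘*] and [1∘*, id] are the universal maps they claim to be …
    i0 ≫ bCounitL = star ≫ zero ∧ i1 ≫ bCounitL = 𝟙 I1 ∧
    i0 ≫ bCounitR = 𝟙 I1 ∧ i1 ≫ bCounitR = star ≫ one ∧
    -- … and the counit axioms hold
    two ≫ bCounitL = 𝟙 I1 ∧
    two ≫ bCounitR = 𝟙 I1 ∧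
    -- coassociativity
    i0 ≫ bCoassocL = i0 ≫ j0 ∧ i1 ≫ bCoassocL = two ≫ j1 ∧
    i0 ≫ bCoassocR = two ≫ j0 ∧ i1 ≫ bCoassocR = i1 ≫ j1 ∧
    two ≫ bCoassocL = two ≫ bCoassocR ∧
    -- the coinverse laws
    i0 ≫ bCoinvL = sigma ∧ i1 ≫ bCoinvL = 𝟙 I1 ∧
    i0 ≫ bCoinvR = 𝟙 I1 ∧ i1 ≫ bCoinvR = sigma ∧
    two ≫ bCoinvL = star ≫ one ∧
    two ≫ bCoinvR = star ≫ zero := by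
  refine ⟨⟨termI0⟩, pushout1, pushout2, ?_, ?_, ?_, ?_, ?_, ?_, ?_, ?_, ?_, ?_, ?_, ?_,
    ?_, ?_, ?_, ?_, ?_, ?_, ?_, ?_, ?_, ?_, ?_, ?_⟩ <;>
  · exact triv _ _ (by intro a; fin_cases a <;> rfl)
end

section
/- Let R be a cartesian closed category with an interval I. For morphisms f, g : A → B, homotopies H : A × I₁ → B with dom(H) = f and cod(H) = g form, together with vertical composition, identity homotopies f∘π₁, and inverses H∘(A × σ), a groupoid structure on the hom-set R(A,B): vertical composition is associative with identities and inverses given as stated. -/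
open CategoryTheory CategoryTheory.Limits CategoryTheory.MonoidalCategory
open CategoryTheory.CartesianClosed CategoryTheory.MonoidalClosed

universe v u

/-- An interval *qua* internal cogroupoid in a category `R`. -/
structure CogroupoidInterval (R : Type u) [Category.{v} R] where
  I0 : R
  I1 : R
  I2 : R
  I3 : R
  isTerminal : IsTerminal I0
  src : I0 ⟶ I1
  tgt : I0 ⟶ I1
  star : I1 ⟶ I0
  sigma : I1 ⟶ I1
  i0 : I1 ⟶ I2
  i1 : I1 ⟶ I2
  two : I1 ⟶ I2
  j0 : I2 ⟶ I3
  j1 : I2 ⟶ I3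
  po : IsPushout src tgt i1 i0
  po2 : IsPushout i1 i0 j0 j1
  two_src : src ≫ two = src ≫ i0
  two_tgt : tgt ≫ two = tgt ≫ i1
  star_src : src ≫ star = 𝟙 I0
  star_tgt : tgt ≫ star = 𝟙 I0
  sigma_src : src ≫ sigma = tgt
  sigma_tgt : tgt ≫ sigma = src
  sigma_sigma : sigma ≫ sigma = 𝟙 I1
  w_counit_l : src ≫ 𝟙 I1 = tgt ≫ (star ≫ src)
  counit_l : two ≫ po.desc (𝟙 I1) (star ≫ src) w_counit_l = 𝟙 I1
  w_counit_r : src ≫ (star ≫ tgt) = tgt ≫ 𝟙 I1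
  counit_r : two ≫ po.desc (star ≫ tgt) (𝟙 I1) w_counit_r = 𝟙 I1
  w_coassoc_l : src ≫ (two ≫ j1) = tgt ≫ (i0 ≫ j0)
  w_coassoc_r : src ≫ (i1 ≫ j1) = tgt ≫ (two ≫ j0)
  coassoc : two ≫ po.desc (two ≫ j1) (i0 ≫ j0) w_coassoc_l =
    two ≫ po.desc (i1 ≫ j1) (two ≫ j0) w_coassoc_r
  w_coinv_l : src ≫ 𝟙 I1 = tgt ≫ sigma
  coinv_l : two ≫ po.desc (𝟙 I1) sigma w_coinv_l = star ≫ tgt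
  w_coinv_r : src ≫ sigma = tgt ≫ 𝟙 I1
  coinv_r : two ≫ po.desc sigma (𝟙 I1) w_coinv_r = star ≫ src

namespace CogroupoidInterval

variable {R : Type u} [Category.{v} R] [CartesianMonoidalCategory R]
  [MonoidalClosed R] (I : CogroupoidInterval R)

/-- `H : A ⊗ I₁ ⟶ B` is a homotopy from `f` to `g`. -/
def IsHtpy {A B : R} (H : A ⊗ I.I1 ⟶ B) (f g : A ⟶ B) : Prop :=
  CartesianMonoidalCategory.lift (𝟙 A) (I.isTerminal.from A ≫ I.src) ≫ H = f ∧
  CartesianMonoidalCategory.lift (𝟙 A) (I.isTerminal.from A ≫ I.tgt) ≫ H = g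

/-- The matching condition allowing two homotopies to be concatenated. -/
def Matches {A B : R} (H H' : A ⊗ I.I1 ⟶ B) : Prop :=
  I.src ≫ curry H' = I.tgt ≫ curry H

/-- Vertical composition `H' ∘ H := [H',H] ∘ (A × 2)` of homotopies, the
universal map `[H',H]` being obtained by transposing across the cartesian
closed structure and using the pushout `I₂`. -/
noncomputable def vcomp {A B : R} (H H' : A ⊗ I.I1 ⟶ B)
    (w : I.Matches H H') : A ⊗ I.I1 ⟶ B :=
  (A ◁ I.two) ≫ uncurry (I.po.desc (curry H') (curry H) w)

/-- The identity homotopy `f ∘ π₁` at `f`. -/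
def idHtpy {A B : R} (f : A ⟶ B) : A ⊗ I.I1 ⟶ B :=
  CartesianMonoidalCategory.fst A I.I1 ≫ f

/-- The inverse homotopy `H ∘ (A × σ)`. -/
def invHtpy {A B : R} (H : A ⊗ I.I1 ⟶ B) : A ⊗ I.I1 ⟶ B :=
  (A ◁ I.sigma) ≫ H

end CogroupoidInterval

namespace CogroupoidInterval

variable {R : Type u} [Category.{v} R] [CartesianMonoidalCategory R]
  [MonoidalClosed R] (I : CogroupoidInterval R)

theorem curry_vcomp {A B : R} (H H' : A ⊗ I.I1 ⟶ B) (w : I.Matches H H') :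
    curry (I.vcomp H H' w) = I.two ≫ I.po.desc (curry H') (curry H) w := by
  rw [vcomp, curry_natural_left, curry_uncurry]

theorem curry_inv {A B : R} (H : A ⊗ I.I1 ⟶ B) :
    curry (I.invHtpy H) = I.sigma ≫ curry H := by
  rw [invHtpy, curry_natural_left]

set_option linter.unusedSectionVars false in
theorem whisker_from {A B : R} (H : A ⊗ I.I1 ⟶ B) (k : I.I0 ⟶ I.I1) :
    (A ◁ (I.star ≫ k)) ≫ H =
      CartesianMonoidalCategory.fst A I.I1 ≫
        CartesianMonoidalCategory.lift (𝟙 A) (I.isTerminal.from A ≫ k) ≫ H := by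
  rw [← Category.assoc]
  congr 1
  apply CartesianMonoidalCategory.hom_ext
  · simp
  · simp only [CartesianMonoidalCategory.whiskerLeft_snd, Category.assoc,
      CartesianMonoidalCategory.lift_snd]
    rw [← Category.assoc, ← Category.assoc]
    congr 1
    exact I.isTerminal.hom_ext _ _

theorem curry_idHtpy {A B : R} (H : A ⊗ I.I1 ⟶ B) {f : A ⟶ B} (k : I.I0 ⟶ I.I1)
    (hf : CartesianMonoidalCategory.lift (𝟙 A) (I.isTerminal.from A ≫ k) ≫ H = f) :
    curry (I.idHtpy f) = I.star ≫ k ≫ curry H := by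
  rw [← curry_natural_left, ← curry_natural_left, ← Category.assoc,
    ← MonoidalCategory.whiskerLeft_comp, whisker_from, hf, idHtpy]

set_option linter.unusedSectionVars false in
theorem lift_whisker {A B : R} (H : A ⊗ I.I1 ⟶ B) (k : I.I0 ⟶ I.I1) :
    CartesianMonoidalCategory.lift (𝟙 A) (I.isTerminal.from A ≫ k) ≫ (A ◁ I.sigma) ≫ H =
      CartesianMonoidalCategory.lift (𝟙 A) (I.isTerminal.from A ≫ k ≫ I.sigma) ≫ H := by
  rw [← Category.assoc]
  congr 1
  apply CartesianMonoidalCategory.hom_ext <;> simp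

end CogroupoidInterval

open CogroupoidInterval in
/-- Let `R` be a cartesian closed category with an interval `I`.
Homotopies `H : A ⊗ I₁ ⟶ B`, together with vertical composition, the
identity homotopies `f ∘ π₁`, and the inverses `H ∘ (A × σ)`, form a
groupoid structure on the hom-set `R(A, B)`: vertical composition is
associative, with identities and inverses as stated. -/
theorem homotopies_form_groupoid {R : Type u} [Category.{v} R]
    [CartesianMonoidalCategory R] [MonoidalClosed R]
    (I : CogroupoidInterval R) (A B : R) :
    -- associativity
    (∀ (f g h k : A ⟶ B) (H H' H'' : A ⊗ I.I1 ⟶ B),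
      I.IsHtpy H f g → I.IsHtpy H' g h → I.IsHtpy H'' h k →
      ∀ (w₁ : I.Matches H H') (w₂ : I.Matches (I.vcomp H H' w₁) H'')
        (w₃ : I.Matches H' H'') (w₄ : I.Matches H (I.vcomp H' H'' w₃)),
        I.vcomp (I.vcomp H H' w₁) H'' w₂ = I.vcomp H (I.vcomp H' H'' w₃) w₄) ∧
    -- identity laws
    (∀ (f g : A ⟶ B) (H : A ⊗ I.I1 ⟶ B), I.IsHtpy H f g →
      ∀ (w₁ : I.Matches (I.idHtpy f) H) (w₂ : I.Matches H (I.idHtpy g)),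
        I.vcomp (I.idHtpy f) H w₁ = H ∧ I.vcomp H (I.idHtpy g) w₂ = H) ∧
    -- the inverse is a homotopy in the opposite direction and the
    -- inverse laws hold
    (∀ (f g : A ⟶ B) (H : A ⊗ I.I1 ⟶ B), I.IsHtpy H f g →
      I.IsHtpy (I.invHtpy H) g f ∧
      ∀ (w₁ : I.Matches H (I.invHtpy H)) (w₂ : I.Matches (I.invHtpy H) H),
        I.vcomp H (I.invHtpy H) w₁ = I.idHtpy f ∧
        I.vcomp (I.invHtpy H) H w₂ = I.idHtpy g) := by
  
  refine ⟨?_, ?_, ?_⟩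
  · rintro f g h k H H' H'' _ _ _ w₁ w₂ w₃ w₄
    have hK : I.i1 ≫ I.po.desc (curry H') (curry H) w₁ =
        I.i0 ≫ I.po.desc (curry H'') (curry H') w₃ := by
      erw [I.po.inl_desc, I.po.inr_desc]
    set K := I.po2.desc (I.po.desc (curry H') (curry H) w₁)
      (I.po.desc (curry H'') (curry H') w₃) hK with hKdef
    apply curry_injective
    refine (I.curry_vcomp _ _ w₂).trans (Eq.trans ?_ (I.curry_vcomp _ _ w₄).symm)
    have hL : I.po.desc (curry H'') (curry (I.vcomp H H' w₁)) w₂ =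
        I.po.desc (I.i1 ≫ I.j1) (I.two ≫ I.j0) I.w_coassoc_r ≫ K := by
      apply I.po.hom_ext
      · erw [I.po.inl_desc, ← Category.assoc, I.po.inl_desc, Category.assoc,
          I.po2.inr_desc, I.po.inl_desc]
      · erw [I.po.inr_desc, ← Category.assoc, I.po.inr_desc, Category.assoc,
          I.po2.inl_desc, I.curry_vcomp]
    have hR : I.po.desc (curry (I.vcomp H' H'' w₃)) (curry H) w₄ =
        I.po.desc (I.two ≫ I.j1) (I.i0 ≫ I.j0) I.w_coassoc_l ≫ K := by
      apply I.po.hom_ext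
      · erw [I.po.inl_desc, ← Category.assoc, I.po.inl_desc, Category.assoc,
          I.po2.inr_desc, I.curry_vcomp]
      · erw [I.po.inr_desc, ← Category.assoc, I.po.inr_desc, Category.assoc,
          I.po2.inl_desc, I.po.inr_desc]
    rw [hL, hR, ← Category.assoc, ← Category.assoc, I.coassoc]
  · rintro f g H ⟨hf, hg⟩ w₁ w₂
    constructor
    · apply curry_injective
      rw [I.curry_vcomp]
      have h1 : I.po.desc (curry H) (curry (I.idHtpy f)) w₁ =
          I.po.desc (𝟙 I.I1) (I.star ≫ I.src) I.w_counit_l ≫ curry H := by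
        apply I.po.hom_ext
        · erw [I.po.inl_desc, ← Category.assoc, I.po.inl_desc, Category.id_comp]
        · erw [I.po.inr_desc, ← Category.assoc, I.po.inr_desc,
            I.curry_idHtpy H I.src hf, Category.assoc]
      rw [h1, ← Category.assoc, I.counit_l, Category.id_comp]
    · apply curry_injective
      rw [I.curry_vcomp]
      have h1 : I.po.desc (curry (I.idHtpy g)) (curry H) w₂ =
          I.po.desc (I.star ≫ I.tgt) (𝟙 I.I1) I.w_counit_r ≫ curry H := by
        apply I.po.hom_ext
        · erw [I.po.inl_desc, ← Category.assoc, I.po.inl_desc,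
            I.curry_idHtpy H I.tgt hg, Category.assoc]
        · erw [I.po.inr_desc, ← Category.assoc, I.po.inr_desc, Category.id_comp]
      rw [h1, ← Category.assoc, I.counit_r, Category.id_comp]
  · rintro f g H ⟨hf, hg⟩
    refine ⟨⟨?_, ?_⟩, ?_⟩
    · rw [invHtpy, I.lift_whisker, I.sigma_src, hg]
    · rw [invHtpy, I.lift_whisker, I.sigma_tgt, hf]
    · intro w₁ w₂
      constructor
      · apply curry_injective
        rw [I.curry_vcomp]
        have h1 : I.po.desc (curry (I.invHtpy H)) (curry H) w₁ =
            I.po.desc I.sigma (𝟙 I.I1) I.w_coinv_r ≫ curry H := by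
          apply I.po.hom_ext
          · erw [I.po.inl_desc, ← Category.assoc, I.po.inl_desc, I.curry_inv]
          · erw [I.po.inr_desc, ← Category.assoc, I.po.inr_desc, Category.id_comp]
        rw [h1, ← Category.assoc, I.coinv_r, I.curry_idHtpy H I.src hf,
          Category.assoc]
      · apply curry_injective
        rw [I.curry_vcomp]
        have h1 : I.po.desc (curry H) (curry (I.invHtpy H)) w₂ =
            I.po.desc (𝟙 I.I1) I.sigma I.w_coinv_l ≫ curry H := by
          apply I.po.hom_ext
          · erw [I.po.inl_desc, ← Category.assoc, I.po.inl_desc, Category.id_comp]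
          · erw [I.po.inr_desc, ← Category.assoc, I.po.inr_desc, I.curry_inv]
        rw [h1, ← Category.assoc, I.coinv_l, I.curry_idHtpy H I.tgt hg,
          Category.assoc]
end

section
/- Let R be a cartesian closed category with an interval I. For each object A of R, the data Π A with objects the maps I₀ → A, morphisms a → b the maps α : I₁ → A with α∘0 = a and α∘1 = b, composition β∘α := [β,α]∘2, identity at a given by a∘*, and inverse of α given by α∘σ, forms a groupoid (the fundamental groupoid of A). -/
open CategoryTheory CategoryTheory.Limits

universe v u

variable {R : Type u} [Category.{v} R]

namespace CogroupoidInterval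

variable (I : CogroupoidInterval R)

/-- A path in `A` from the point `a` to the point `b`: a morphism of the
fundamental groupoid `Π A`. -/
def PHom {A : R} (a b : I.I0 ⟶ A) : Type v :=
  {p : I.I1 ⟶ A // I.src ≫ p = a ∧ I.tgt ≫ p = b}

/-- The identity path `a∘*` at the point `a`. -/
def pid {A : R} (a : I.I0 ⟶ A) : I.PHom a a :=
  ⟨I.star ≫ a,
    by rw [← Category.assoc, I.star_src, Category.id_comp],
    by rw [← Category.assoc, I.star_tgt, Category.id_comp]⟩

/-- Composition `β ∘ α := [β, α] ∘ 2` of paths in the fundamental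
groupoid. -/
noncomputable def pcomp {A : R} {a b c : I.I0 ⟶ A} (p : I.PHom a b) (q : I.PHom b c) :
    I.PHom a c :=
  ⟨I.two ≫ I.po.desc q.1 p.1 (by rw [q.2.1, p.2.2]),
    by rw [← Category.assoc, I.two_src, Category.assoc, I.po.inr_desc, p.2.1],
    by rw [← Category.assoc, I.two_tgt, Category.assoc, I.po.inl_desc, q.2.2]⟩

/-- The inverse `α ∘ σ` of a path. -/
def pinv {A : R} {a b : I.I0 ⟶ A} (p : I.PHom a b) : I.PHom b a :=
  ⟨I.sigma ≫ p.1,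
    by rw [← Category.assoc, I.sigma_src, p.2.2],
    by rw [← Category.assoc, I.sigma_tgt, p.2.1]⟩

end CogroupoidInterval

/-- **The fundamental groupoid.**  Let `R` be a cartesian closed category
with an interval `I`.  For each object `A` of `R`, the points `I₀ ⟶ A`,
with morphisms `a → b` the paths `α : I₁ ⟶ A` such that `α∘0 = a` and
`α∘1 = b`, composition `β ∘ α := [β,α] ∘ 2`, identities `a∘*` and
inverses `α∘σ`, form a groupoid `Π A`. -/
theorem fundamental_groupoid_is_groupoid
    [CartesianMonoidalCategory R] [MonoidalClosed R] (I : CogroupoidInterval R) (A : R) :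
    (∀ (a b c d : I.I0 ⟶ A) (p : I.PHom a b) (q : I.PHom b c)
      (r : I.PHom c d),
      I.pcomp (I.pcomp p q) r = I.pcomp p (I.pcomp q r)) ∧
    (∀ (a b : I.I0 ⟶ A) (p : I.PHom a b),
      I.pcomp (I.pid a) p = p ∧ I.pcomp p (I.pid b) = p) ∧
    (∀ (a b : I.I0 ⟶ A) (p : I.PHom a b),
      I.pcomp p (I.pinv p) = I.pid a ∧ I.pcomp (I.pinv p) p = I.pid b) := by
  -- helper: postcomposition through `po.desc`
  have hdesc : ∀ {W X : R} (f : I.I1 ⟶ W) (g : I.I1 ⟶ W) (w : I.src ≫ f = I.tgt ≫ g)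
      (h : W ⟶ X), I.po.desc f g w ≫ h =
        I.po.desc (f ≫ h) (g ≫ h) (by rw [← Category.assoc, w, Category.assoc]) := by
    intro W X f g w h
    apply I.po.hom_ext
    · rw [← Category.assoc, I.po.inl_desc, I.po.inl_desc]
    · rw [← Category.assoc, I.po.inr_desc, I.po.inr_desc]
  refine ⟨?_, ?_, ?_⟩
  · -- associativity
    intro a b c d p q r
    apply Subtype.ext
    show I.two ≫ I.po.desc _ _ _ = I.two ≫ I.po.desc _ _ _
    have wF : I.i1 ≫ I.po.desc q.1 p.1 (by rw [q.2.1, p.2.2])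
        = I.i0 ≫ I.po.desc r.1 q.1 (by rw [r.2.1, q.2.2]) := by
      rw [I.po.inl_desc, I.po.inr_desc]
    set F : I.I3 ⟶ A := I.po2.desc _ _ wF with hF
    have hj0 : I.j0 ≫ F = I.po.desc q.1 p.1 (by rw [q.2.1, p.2.2]) := I.po2.inl_desc _ _ _
    have hj1 : I.j1 ≫ F = I.po.desc r.1 q.1 (by rw [r.2.1, q.2.2]) := I.po2.inr_desc _ _ _
    have key := congrArg (fun t => t ≫ F) I.coassoc
    simp only [Category.assoc] at key
    rw [hdesc _ _ _ F, hdesc _ _ _ F] at key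
    convert key.symm using 3 <;>
      simp only [CogroupoidInterval.pcomp, Category.assoc, hj0, hj1,
        I.po.inl_desc, I.po.inr_desc]
  · -- identities
    intro a b p
    constructor
    · apply Subtype.ext
      show I.two ≫ I.po.desc p.1 (I.star ≫ a) _ = p.1
      have : I.po.desc p.1 (I.star ≫ a) (by
            rw [p.2.1, ← Category.assoc, I.star_tgt, Category.id_comp]) =
          I.po.desc (𝟙 I.I1) (I.star ≫ I.src) I.w_counit_l ≫ p.1 := by
        rw [hdesc]
        apply I.po.hom_ext
        · rw [I.po.inl_desc, I.po.inl_desc, Category.id_comp]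
        · rw [I.po.inr_desc, I.po.inr_desc, Category.assoc, p.2.1]
      rw [this, ← Category.assoc, I.counit_l, Category.id_comp]
    · apply Subtype.ext
      show I.two ≫ I.po.desc (I.star ≫ b) p.1 _ = p.1
      have : I.po.desc (I.star ≫ b) p.1 (by
            rw [p.2.2, ← Category.assoc, I.star_src, Category.id_comp]) =
          I.po.desc (I.star ≫ I.tgt) (𝟙 I.I1) I.w_counit_r ≫ p.1 := by
        rw [hdesc]
        apply I.po.hom_ext
        · rw [I.po.inl_desc, I.po.inl_desc, Category.assoc, p.2.2]
        · rw [I.po.inr_desc, I.po.inr_desc, Category.id_comp]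
      rw [this, ← Category.assoc, I.counit_r, Category.id_comp]
  · -- inverses
    intro a b p
    constructor
    · apply Subtype.ext
      show I.two ≫ I.po.desc (I.sigma ≫ p.1) p.1 _ = I.star ≫ a
      have : I.po.desc (I.sigma ≫ p.1) p.1 (by
            rw [← Category.assoc, I.sigma_src, p.2.2]) =
          I.po.desc I.sigma (𝟙 I.I1) I.w_coinv_r ≫ p.1 := by
        rw [hdesc]
        apply I.po.hom_ext
        · rw [I.po.inl_desc, I.po.inl_desc]
        · rw [I.po.inr_desc, I.po.inr_desc, Category.id_comp]
      rw [this, ← Category.assoc, I.coinv_r, Category.assoc, p.2.1]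
    · apply Subtype.ext
      show I.two ≫ I.po.desc p.1 (I.sigma ≫ p.1) _ = I.star ≫ b
      have : I.po.desc p.1 (I.sigma ≫ p.1) (by
            rw [← Category.assoc, I.sigma_tgt]) =
          I.po.desc (𝟙 I.I1) I.sigma I.w_coinv_l ≫ p.1 := by
        rw [hdesc]
        apply I.po.hom_ext
        · rw [I.po.inl_desc, I.po.inl_desc, Category.id_comp]
        · rw [I.po.inr_desc, I.po.inr_desc]
      rw [this, ← Category.assoc, I.coinv_l, Category.assoc, p.2.2]
end

section
/- Let R be a cartesian closed category with an interval I. The assignment A ↦ Π A, with Π(f) for f : A → B given by post-composition with f on both points and paths, defines a functor Π : R → Gpd from R to groupoids; functoriality uses that f∘[β,α] = [f∘β, f∘α] by the universal property of the pushout defining I₂. -/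
open CategoryTheory CategoryTheory.Limits

universe v u

namespace CogroupoidInterval

variable {R : Type u} [Category.{v} R] (I : CogroupoidInterval R)

/-- The action of `Π(f)` on points: post-composition with `f`. -/
def pmapObj {A B : R} (f : A ⟶ B) (a : I.I0 ⟶ A) : I.I0 ⟶ B := a ≫ f

/-- The action of `Π(f)` on paths: post-composition with `f`. -/
def pmap {A B : R} (f : A ⟶ B) {a b : I.I0 ⟶ A} (p : I.PHom a b) :
    I.PHom (a ≫ f) (b ≫ f) :=
  ⟨p.1 ≫ f,
    by rw [← Category.assoc, p.2.1],
    by rw [← Category.assoc, p.2.2]⟩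

end CogroupoidInterval

open CogroupoidInterval in
lemma phom_heq_aux {R : Type u} [Category.{v} R] (I : CogroupoidInterval R)
    {A : R} {a b a' b' : I.I0 ⟶ A} (ha : a = a') (hb : b = b')
    (p : I.PHom a b) (q : I.PHom a' b') (h : p.1 = q.1) : HEq p q := by
  subst ha hb
  rw [heq_iff_eq]
  exact Subtype.ext h

open CogroupoidInterval in
/-- Let `R` be a cartesian closed category with an interval `I`.  The
assignment `A ↦ Π A`, with `Π(f)` given by post-composition with
`f : A ⟶ B` on both points and paths, defines a functor `Π : R → Gpd`:
each `Π(f)` preserves identity paths and composition of paths (the latter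
because `f ∘ [β,α] = [f∘β, f∘α]`, by the universal property of the pushout
defining `I₂`), `Π` preserves identities and composition of morphisms of
`R`. -/
theorem fundamental_groupoid_functorial {R : Type u} [Category.{v} R]
    [CartesianMonoidalCategory R] [MonoidalClosed R] (I : CogroupoidInterval R) :
    -- `Π(f)` is a functor: it preserves identity paths …
    (∀ (A B : R) (f : A ⟶ B) (a : I.I0 ⟶ A),
      I.pmap f (I.pid a) = I.pid (a ≫ f)) ∧
    -- … and composition of paths, via `f ∘ [β,α] = [f∘β, f∘α]`
    (∀ (A B : R) (f : A ⟶ B) (a b c : I.I0 ⟶ A) (p : I.PHom a b)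
      (q : I.PHom b c)
      (w : I.src ≫ q.1 = I.tgt ≫ p.1)
      (w' : I.src ≫ (q.1 ≫ f) = I.tgt ≫ (p.1 ≫ f)),
      I.po.desc q.1 p.1 w ≫ f = I.po.desc (q.1 ≫ f) (p.1 ≫ f) w' ∧
      I.pmap f (I.pcomp p q) = I.pcomp (I.pmap f p) (I.pmap f q)) ∧
    -- `Π` itself is functorial: it preserves identities …
    (∀ (A : R) (a b : I.I0 ⟶ A) (p : I.PHom a b),
      a ≫ 𝟙 A = a ∧ HEq (I.pmap (𝟙 A) p) p) ∧
    -- … and composition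
    (∀ (A B C : R) (f : A ⟶ B) (g : B ⟶ C) (a b : I.I0 ⟶ A)
      (p : I.PHom a b),
      a ≫ (f ≫ g) = (a ≫ f) ≫ g ∧
      HEq (I.pmap (f ≫ g) p) (I.pmap g (I.pmap f p))) := by
  refine ⟨?_, ?_, ?_, ?_⟩
  · intro A B f a
    apply Subtype.ext
    simp [CogroupoidInterval.pmap, CogroupoidInterval.pid, Category.assoc]
  · intro A B f a b c p q w w'
    have hdesc : I.po.desc q.1 p.1 w ≫ f = I.po.desc (q.1 ≫ f) (p.1 ≫ f) w' := by
      apply I.po.hom_ext <;> simp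
    refine ⟨hdesc, ?_⟩
    apply Subtype.ext
    simp only [CogroupoidInterval.pmap, CogroupoidInterval.pcomp, Category.assoc, hdesc]
  · intro A a b p
    refine ⟨Category.comp_id a, ?_⟩
    have ha : a ≫ 𝟙 A = a := Category.comp_id a
    have hb : b ≫ 𝟙 A = b := Category.comp_id b
    exact phom_heq_aux I ha hb _ _ (by simp [CogroupoidInterval.pmap])
  · intro A B C f g a b p
    refine ⟨(Category.assoc a f g).symm, ?_⟩
    have ha : a ≫ f ≫ g = (a ≫ f) ≫ g := (Category.assoc a f g).symm
    have hb : b ≫ f ≫ g = (b ≫ f) ≫ g := (Category.assoc b f g).symm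
    exact phom_heq_aux I ha hb _ _ (by simp [CogroupoidInterval.pmap])
end

section
/- Let R be a cartesian closed category with interval I, let H : A × I₁ → B be a homotopy from f to g, and let α : a → b be a path in the fundamental groupoid Π A. Then in Π B the diagonal path H∘⟨α, id_{I₁}⟩ : Π(f)(a) → Π(g)(b) equals the composite (H∘⟨α, 1∘*⟩) ∘ (H∘⟨α∘0∘*, id_{I₁}⟩) and also equals (H∘⟨α∘1∘*, id_{I₁}⟩) ∘ (H∘⟨α, 0∘*⟩); i.e., the naturality square with diagonal commutes. -/
open CategoryTheory CategoryTheory.Limits CategoryTheory.MonoidalCategory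

universe v u

section Aux

open CartesianMonoidalCategory

variable {R : Type u} [Category.{v} R] [CartesianMonoidalCategory R]
  (I : CogroupoidInterval R)

set_option linter.unusedSectionVars false

lemma CogroupoidInterval.desc_congr {X : R} {u u' v v' : I.I1 ⟶ X} (w w')
    (hu : u = u') (hv : v = v') : I.po.desc u v w = I.po.desc u' v' w' := by
  subst hu hv; rfl

lemma CogroupoidInterval.desc_postcomp {X Y : R} (u v : I.I1 ⟶ X) (w) (k : X ⟶ Y) :
    I.po.desc u v w ≫ k =
      I.po.desc (u ≫ k) (v ≫ k) (by rw [reassoc_of% w]) := by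
  apply I.po.hom_ext <;> simp

lemma CogroupoidInterval.diag_decomp₁ (w) :
    I.two ≫ I.po.desc (lift (𝟙 I.I1) (I.star ≫ I.tgt))
      (lift (I.star ≫ I.src) (𝟙 I.I1)) w = lift (𝟙 I.I1) (𝟙 I.I1) := by
  apply CartesianMonoidalCategory.hom_ext
  · rw [Category.assoc, I.desc_postcomp,
      I.desc_congr _ I.w_counit_l (by simp) (by simp), I.counit_l, lift_fst]
  · rw [Category.assoc, I.desc_postcomp,
      I.desc_congr _ I.w_counit_r (by simp) (by simp), I.counit_r, lift_snd]

lemma CogroupoidInterval.diag_decomp₂ (w) :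
    I.two ≫ I.po.desc (lift (I.star ≫ I.tgt) (𝟙 I.I1))
      (lift (𝟙 I.I1) (I.star ≫ I.src)) w = lift (𝟙 I.I1) (𝟙 I.I1) := by
  apply CartesianMonoidalCategory.hom_ext
  · rw [Category.assoc, I.desc_postcomp,
      I.desc_congr _ I.w_counit_r (by simp) (by simp), I.counit_r, lift_fst]
  · rw [Category.assoc, I.desc_postcomp,
      I.desc_congr _ I.w_counit_l (by simp) (by simp), I.counit_l, lift_snd]

end Aux

open CogroupoidInterval CartesianMonoidalCategory in
/-- Let `R` be a cartesian closed category with interval `I`, let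
`H : A ⊗ I₁ ⟶ B` be a homotopy from `f` to `g`, and let `α : a → b` be a
path in the fundamental groupoid `Π A`.  Then in `Π B` the diagonal path
`H ∘ ⟨α, id⟩ : Π(f)(a) → Π(g)(b)` equals the composite
`(H ∘ ⟨α, 1∘*⟩) ∘ (H ∘ ⟨α∘0∘*, id⟩)` and also equals
`(H ∘ ⟨α∘1∘*, id⟩) ∘ (H ∘ ⟨α, 0∘*⟩)`: the naturality square together with
its diagonal commutes. -/
theorem homotopy_naturality_square_with_diagonal
    {R : Type u} [Category.{v} R] [CartesianMonoidalCategory R]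
    [MonoidalClosed R] (I : CogroupoidInterval R)
    {A B : R} (f g : A ⟶ B) (H : A ⊗ I.I1 ⟶ B)
    -- `H` is a homotopy from `f` to `g`
    (hH0 : lift (𝟙 A) (I.isTerminal.from A ≫ I.src) ≫ H = f)
    (hH1 : lift (𝟙 A) (I.isTerminal.from A ≫ I.tgt) ≫ H = g)
    -- `α` is a path from `a` to `b` in `Π A`
    (a b : I.I0 ⟶ A) (α : I.I1 ⟶ A)
    (hα0 : I.src ≫ α = a) (hα1 : I.tgt ≫ α = b)
    -- the five paths in `Π B` (with their endpoints):
    -- the diagonal `H ∘ ⟨α, id⟩ : Π(f)(a) → Π(g)(b)`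
    (hd0 : I.src ≫ (lift α (𝟙 I.I1) ≫ H) = a ≫ f)
    (hd1 : I.tgt ≫ (lift α (𝟙 I.I1) ≫ H) = b ≫ g)
    -- the top edge `H ∘ ⟨α∘0∘*, id⟩ : Π(f)(a) → Π(g)(a)`
    (ht0 : I.src ≫ (lift (I.star ≫ I.src ≫ α) (𝟙 I.I1) ≫ H) = a ≫ f)
    (ht1 : I.tgt ≫ (lift (I.star ≫ I.src ≫ α) (𝟙 I.I1) ≫ H) = a ≫ g)
    -- the right edge `H ∘ ⟨α, 1∘*⟩ : Π(g)(a) → Π(g)(b)`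
    (hr0 : I.src ≫ (lift α (I.star ≫ I.tgt) ≫ H) = a ≫ g)
    (hr1 : I.tgt ≫ (lift α (I.star ≫ I.tgt) ≫ H) = b ≫ g)
    -- the left edge `H ∘ ⟨α, 0∘*⟩ : Π(f)(a) → Π(f)(b)`
    (hl0 : I.src ≫ (lift α (I.star ≫ I.src) ≫ H) = a ≫ f)
    (hl1 : I.tgt ≫ (lift α (I.star ≫ I.src) ≫ H) = b ≫ f)
    -- the bottom edge `H ∘ ⟨α∘1∘*, id⟩ : Π(f)(b) → Π(g)(b)`
    (hb0 : I.src ≫ (lift (I.star ≫ I.tgt ≫ α) (𝟙 I.I1) ≫ H) = b ≫ f)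
    (hb1 : I.tgt ≫ (lift (I.star ≫ I.tgt ≫ α) (𝟙 I.I1) ≫ H) = b ≫ g) :
    -- the diagonal is the composite of the top and right edges …
    (⟨lift α (𝟙 I.I1) ≫ H, hd0, hd1⟩ : I.PHom (a ≫ f) (b ≫ g)) =
      I.pcomp (⟨lift (I.star ≫ I.src ≫ α) (𝟙 I.I1) ≫ H, ht0, ht1⟩ :
          I.PHom (a ≫ f) (a ≫ g))
        (⟨lift α (I.star ≫ I.tgt) ≫ H, hr0, hr1⟩ :
          I.PHom (a ≫ g) (b ≫ g)) ∧
    -- … and also the composite of the left and bottom edges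
    (⟨lift α (𝟙 I.I1) ≫ H, hd0, hd1⟩ : I.PHom (a ≫ f) (b ≫ g)) =
      I.pcomp (⟨lift α (I.star ≫ I.src) ≫ H, hl0, hl1⟩ :
          I.PHom (a ≫ f) (b ≫ f))
        (⟨lift (I.star ≫ I.tgt ≫ α) (𝟙 I.I1) ≫ H, hb0, hb1⟩ :
          I.PHom (b ≫ f) (b ≫ g)) := by
  have key : ∀ (u v : I.I1 ⟶ I.I1 ⊗ I.I1) (w)
      (h : I.two ≫ I.po.desc u v w = lift (𝟙 I.I1) (𝟙 I.I1)),
      lift α (𝟙 I.I1) ≫ H =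
        I.two ≫ I.po.desc (u ≫ (α ⊗ₘ 𝟙 I.I1) ≫ H) (v ≫ (α ⊗ₘ 𝟙 I.I1) ≫ H)
          (by rw [reassoc_of% w]) := by
    intro u v w h
    have : I.po.desc (u ≫ (α ⊗ₘ 𝟙 I.I1) ≫ H) (v ≫ (α ⊗ₘ 𝟙 I.I1) ≫ H)
        (by rw [reassoc_of% w]) = I.po.desc u v w ≫ (α ⊗ₘ 𝟙 I.I1) ≫ H := by
      rw [I.desc_postcomp]
    rw [this, reassoc_of% h, lift_map_assoc, Category.comp_id, Category.id_comp]
  constructor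
  · apply Subtype.ext
    dsimp [CogroupoidInterval.pcomp]
    have e1 : lift α (I.star ≫ I.tgt) ≫ H =
        lift (𝟙 I.I1) (I.star ≫ I.tgt) ≫ (α ⊗ₘ 𝟙 I.I1) ≫ H := by
      rw [lift_map_assoc, Category.id_comp, Category.comp_id]
    have e2 : lift (I.star ≫ I.src ≫ α) (𝟙 I.I1) ≫ H =
        lift (I.star ≫ I.src) (𝟙 I.I1) ≫ (α ⊗ₘ 𝟙 I.I1) ≫ H := by
      rw [lift_map_assoc, Category.id_comp, Category.assoc]
    simp only [e1, e2]
    exact key _ _ (by apply CartesianMonoidalCategory.hom_ext <;>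
        simp [reassoc_of% I.star_src, reassoc_of% I.star_tgt])
      (I.diag_decomp₁ _)
  · apply Subtype.ext
    dsimp [CogroupoidInterval.pcomp]
    have e1 : lift (I.star ≫ I.tgt ≫ α) (𝟙 I.I1) ≫ H =
        lift (I.star ≫ I.tgt) (𝟙 I.I1) ≫ (α ⊗ₘ 𝟙 I.I1) ≫ H := by
      rw [lift_map_assoc, Category.id_comp, Category.assoc]
    have e2 : lift α (I.star ≫ I.src) ≫ H =
        lift (𝟙 I.I1) (I.star ≫ I.src) ≫ (α ⊗ₘ 𝟙 I.I1) ≫ H := by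
      rw [lift_map_assoc, Category.id_comp, Category.comp_id]
    simp only [e1, e2]
    exact key _ _ (by apply CartesianMonoidalCategory.hom_ext <;>
        simp [reassoc_of% I.star_src, reassoc_of% I.star_tgt])
      (I.diag_decomp₂ _)
end
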